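/- Let F be the distribution function of a Borel probability measure on R with infinite right endpoint x_F = infty, and suppose F belongs to the maximum domain of attraction D(G_0) of the Gumbel distribution. Then the integral over [0, infty) of (1 - F(z)) dz is finite. -/

import Mathlib

open MeasureTheory Filter Topology Set NNReal

/-- The cumulative distribution function of a Borel probability measure on `ℝ`:
`F(x) = μ((-∞, x])`. -/
noncomputable def distrib (μ : ProbabilityMeasure ℝ) (x : ℝ) : ℝ :=
  (μ (Set.Iic x) : ℝ≥0)

/-- The generalized extreme value distribution function `G_γ`, with
`G_γ(x) = exp(-(1+γx)^(-1/γ))` where `1 + γx > 0` (interpreted as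
`G_0(x) = exp(-e^(-x))` when `γ = 0`). -/
noncomputable def evCdf (γ : ℝ) (x : ℝ) : ℝ :=
  if γ = 0 then Real.exp (-Real.exp (-x))
  else if 0 < 1 + γ * x then Real.exp (-(1 + γ * x) ^ (-1 / γ))
  else if 0 < γ then 0 else 1

/-- `μ` belongs to the maximum domain of attraction `D(G_γ)`: there are `a n > 0` and `b n`
such that `(F (a n * x + b n)) ^ n → G_γ x` at every continuity point `x` of `G_γ`. -/
def MemDomAttr (γ : ℝ) (μ : ProbabilityMeasure ℝ) : Prop :=
  ∃ a b : ℕ → ℝ, (∀ n, 0 < a n) ∧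
    ∀ x : ℝ, ContinuousAt (evCdf γ) x →
      Tendsto (fun n : ℕ => distrib μ (a n * x + b n) ^ n) atTop (𝓝 (evCdf γ x))

/-- The right endpoint `x_F = sup {x : F x < 1}` of a distribution, as an extended real. -/
noncomputable def rightEndpoint (μ : ProbabilityMeasure ℝ) : EReal :=
  sSup ((fun x : ℝ => (x : EReal)) '' {x : ℝ | distrib μ x < 1})

private lemma distrib_mono (μ : ProbabilityMeasure ℝ) : Monotone (distrib μ) := by
  intro x y hxy
  exact_mod_cast μ.apply_mono (Set.Iic_subset_Iic.mpr hxy)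

private lemma distrib_nonneg (μ : ProbabilityMeasure ℝ) (x : ℝ) : 0 ≤ distrib μ x :=
  (μ (Set.Iic x)).coe_nonneg

private lemma distrib_le_one (μ : ProbabilityMeasure ℝ) (x : ℝ) : distrib μ x ≤ 1 := by
  exact_mod_cast μ.apply_le_one (Set.Iic x)

/-- If `F` has infinite right endpoint and belongs to the maximum domain of attraction of
the Gumbel distribution `G_0`, then `∫_0^∞ (1 - F z) dz < ∞`. -/
theorem gumbel_domain_integral_finite (μ : ProbabilityMeasure ℝ)
    (hend : rightEndpoint μ = ⊤) (h : MemDomAttr 0 μ) :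
    ∫⁻ z in Set.Ici (0 : ℝ), ENNReal.ofReal (1 - distrib μ z) < ⊤ := by
  classical
  obtain ⟨a, b, ha, hconv⟩ := h
  set F := distrib μ with hF
  have hFm : Monotone F := distrib_mono μ
  have hF0 : ∀ x, 0 ≤ F x := distrib_nonneg μ
  have hFle1 : ∀ x, F x ≤ 1 := distrib_le_one μ
  -- F < 1 everywhere
  have hF1 : ∀ x, F x < 1 := by
    intro x
    have htop : (x : EReal) < rightEndpoint μ := by rw [hend]; exact EReal.coe_lt_top x
    rw [rightEndpoint, lt_sSup_iff] at htop
    obtain ⟨e, ⟨y, hy, rfl⟩, hxy⟩ := htop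
    have hxy' : (x : EReal) < (y : EReal) := hxy
    exact lt_of_le_of_lt (hFm (by exact_mod_cast hxy'.le)) hy
  -- the convergence at every point
  have hP : ∀ x : ℝ, Tendsto (fun n : ℕ => F (a n * x + b n) ^ n) atTop
      (𝓝 (Real.exp (-Real.exp (-x)))) := by
    intro x
    have hc : ContinuousAt (evCdf 0) x := by
      have he : evCdf 0 = fun x => Real.exp (-Real.exp (-x)) := by
        funext y; simp [evCdf]
      rw [he]
      exact (Real.continuous_exp.comp (continuous_neg.comp
        (Real.continuous_exp.comp continuous_neg))).continuousAt
    have := hconv x hc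
    simpa [evCdf] using this
  have h2 : Tendsto (fun n : ℕ => 2 * n) atTop atTop :=
    tendsto_atTop_mono (fun n => Nat.le_mul_of_pos_left n (by norm_num)) tendsto_id
  have hP0 : Tendsto (fun n : ℕ => F (b n) ^ n) atTop (𝓝 (Real.exp (-1))) := by
    have := hP 0
    simpa using this
  -- F(b (2n)) ^ n → exp(-(1/2))
  have hQ : Tendsto (fun n : ℕ => F (b (2*n)) ^ n) atTop (𝓝 (Real.exp (-(1/2)))) := by
    have T1 : Tendsto (fun n : ℕ => F (b (2*n)) ^ (2*n)) atTop (𝓝 (Real.exp (-1))) :=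
      hP0.comp h2
    have T2 := (Real.continuous_sqrt.continuousAt (x := Real.exp (-1))).tendsto.comp T1
    have hsq : ∀ n : ℕ, Real.sqrt (F (b (2*n)) ^ (2*n)) = F (b (2*n)) ^ n := by
      intro n
      rw [show 2*n = n*2 by ring, pow_mul]
      exact Real.sqrt_sq (pow_nonneg (hF0 _) n)
    have hse : Real.sqrt (Real.exp (-1)) = Real.exp (-(1/2)) := by
      rw [show Real.exp (-1) = Real.exp (-(1/2)) ^ 2 by
        rw [← Real.exp_nat_mul]; norm_num]
      exact Real.sqrt_sq (Real.exp_pos _).le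
    have T2' : Tendsto (fun n : ℕ => Real.sqrt (F (b (2*n)) ^ (2*n))) atTop
        (𝓝 (Real.sqrt (Real.exp (-1)))) := T2
    simpa [hsq, hse] using T2'
  -- numeric inequalities
  have e3half : Real.exp (-3) < 1/2 := by
    rw [Real.exp_neg, inv_lt_comm₀ (Real.exp_pos 3) (by norm_num)]
    have := Real.add_one_le_exp (3:ℝ)
    linarith
  have ineq1 : Real.exp (-1) < Real.exp (-(1/2)) := Real.exp_lt_exp.mpr (by norm_num)
  have ineq2 : Real.exp (-(1/2)) < Real.exp (-Real.exp (-3)) :=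
    Real.exp_lt_exp.mpr (by linarith)
  have ineq3 : Real.exp (-Real.exp (-10)) < (Real.exp (-Real.exp (-11))) ^ 2 := by
    rw [← Real.exp_nat_mul]
    apply Real.exp_lt_exp.mpr
    have h10 : Real.exp (-11) = Real.exp (-10) * Real.exp (-1) := by
      rw [← Real.exp_add]; norm_num
    have he1 : Real.exp (-1) < 1/2 := by
      rw [Real.exp_neg, inv_lt_comm₀ (Real.exp_pos 1) (by norm_num)]
      have := Real.exp_one_gt_d9; linarith
    have hx : 0 < Real.exp (-10) * (1/2 - Real.exp (-1)) :=
      mul_pos (Real.exp_pos _) (by linarith)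
    have key : 2 * Real.exp (-11) < Real.exp (-10) := by nlinarith
    push_cast
    linarith
  have ineq4 : Real.exp (-2) < Real.exp (-1) := Real.exp_lt_exp.mpr (by norm_num)
  -- eventual statements
  have ev1 : ∀ᶠ n : ℕ in atTop, F (b n) ^ n < F (b (2*n)) ^ n :=
    hP0.eventually_lt hQ ineq1
  have ev2 : ∀ᶠ n : ℕ in atTop, F (b (2*n)) ^ n < F (a n * 3 + b n) ^ n :=
    hQ.eventually_lt (hP 3) ineq2
  have ev3 : ∀ᶠ n : ℕ in atTop,
      F (a (2*n) * 10 + b (2*n)) ^ (2*n) < (F (a n * 11 + b n) ^ n) ^ 2 :=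
    ((hP 10).comp h2).eventually_lt ((hP 11).pow 2) ineq3
  have ev4 : ∀ᶠ n : ℕ in atTop, Real.exp (-2) < F (b n) ^ n :=
    hP0.eventually (eventually_gt_nhds ineq4)
  have ev5 : ∀ᶠ n : ℕ in atTop, 2 / (n:ℝ) < 1 - F 0 :=
    (_root_.tendsto_const_div_atTop_nhds_zero_nat 2).eventually
      (eventually_lt_nhds (by linarith [hF1 0]))
  obtain ⟨N, hN⟩ := eventually_atTop.mp
    ((ev1.and (ev2.and (ev3.and (ev4.and ev5)))).and (eventually_ge_atTop 1))
  -- derived facts for n ≥ N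
  have HD1 : ∀ n, N ≤ n → b n < b (2*n) := by
    intro n hn
    have h1 := (hN n hn).1.1
    exact hFm.reflect_lt (lt_of_pow_lt_pow_left₀ n (hF0 _) h1)
  have HD2 : ∀ n, N ≤ n → b (2*n) < a n * 3 + b n := by
    intro n hn
    have h1 := (hN n hn).1.2.1
    exact hFm.reflect_lt (lt_of_pow_lt_pow_left₀ n (hF0 _) h1)
  have HD3 : ∀ n, N ≤ n → a (2*n) ≤ 11/10 * a n := by
    intro n hn
    have h1 := (hN n hn).1.2.2.1
    rw [show (F (a n * 11 + b n) ^ n) ^ 2 = F (a n * 11 + b n) ^ (2*n) by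
      rw [show 2*n = n*2 by ring, pow_mul]] at h1
    have h2 : a (2*n) * 10 + b (2*n) < a n * 11 + b n :=
      hFm.reflect_lt (lt_of_pow_lt_pow_left₀ (2*n) (hF0 _) h1)
    have h3 := HD1 n hn
    linarith
  have HD4 : ∀ n, N ≤ n → 1 - F (b n) < 2 / n := by
    intro n hn
    have h1 := (hN n hn).1.2.2.2.1
    have hn1 : (1:ℕ) ≤ n := (hN n hn).2
    have hne : (n:ℝ) ≠ 0 := Nat.cast_ne_zero.mpr (by omega)
    have h2 : Real.exp (-(2/n)) ^ n = Real.exp (-2) := by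
      rw [← Real.exp_nat_mul]
      congr 1
      field_simp
    rw [← h2] at h1
    have h3 : Real.exp (-(2/n)) < F (b n) :=
      lt_of_pow_lt_pow_left₀ n (hF0 _) h1
    have h4 := Real.add_one_le_exp (-(2/(n:ℝ)))
    linarith
  have HD5 : ∀ n, N ≤ n → 0 < b n := by
    intro n hn
    have h1 := HD4 n hn
    have h2 := (hN n hn).1.2.2.2.2
    have : F 0 < F (b n) := by linarith
    exact hFm.reflect_lt this
  -- dyadic sequence
  set c : ℕ → ℝ := fun k => b (N * 2^k) with hc
  have hmN : ∀ k : ℕ, N ≤ N * 2^k := fun k =>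
    Nat.le_mul_of_pos_right N (Nat.pow_pos (n := k) (by norm_num))
  have hm2 : ∀ k : ℕ, N * 2^(k+1) = 2 * (N * 2^k) := fun k => by ring
  have hck : ∀ k, c k < c (k+1) := by
    intro k
    have h1 := HD1 (N * 2^k) (hmN k)
    rw [← hm2 k] at h1
    exact h1
  have hgap : ∀ k, c (k+1) - c k < 3 * a (N * 2^k) := by
    intro k
    have := HD2 (N * 2^k) (hmN k)
    rw [← hm2 k] at this
    simp only [hc]
    linarith
  have habound : ∀ k, a (N * 2^k) ≤ (11/10:ℝ)^k * a N := by
    intro k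
    induction k with
    | zero => simp
    | succ k ih =>
      have h1 := HD3 (N * 2^k) (hmN k)
      rw [← hm2 k] at h1
      have h2 : (0:ℝ) < 11/10 := by norm_num
      calc a (N * 2^(k+1)) ≤ 11/10 * a (N * 2^k) := h1
        _ ≤ 11/10 * ((11/10:ℝ)^k * a N) := by
            apply mul_le_mul_of_nonneg_left ih h2.le
        _ = (11/10:ℝ)^(k+1) * a N := by ring
  have htail : ∀ k, 1 - F (c k) < 2 / 2^k := by
    intro k
    have h1 := HD4 (N * 2^k) (hmN k)
    have hN1 : (1:ℕ) ≤ N := (hN N le_rfl).2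
    have h2 : (2:ℝ) / (N * 2^k : ℕ) ≤ 2 / 2^k := by
      apply div_le_div_of_nonneg_left (by norm_num) (by positivity)
      push_cast
      calc ((2:ℝ)^k) = 1 * 2^k := by ring
        _ ≤ N * 2^k := by
            apply mul_le_mul_of_nonneg_right _ (by positivity)
            exact_mod_cast hN1
    calc 1 - F (c k) < 2 / (N * 2^k : ℕ) := h1
      _ ≤ 2 / 2^k := h2
  have hc0pos : 0 < c 0 := HD5 (N * 2^0) (hmN 0)
  -- coverage: c is unbounded
  have hcov : ∀ M : ℝ, ∃ k, M < c k := by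
    intro M
    have ev6 : ∀ᶠ n : ℕ in atTop, 2 / (n:ℝ) < 1 - F M :=
      (_root_.tendsto_const_div_atTop_nhds_zero_nat 2).eventually
        (eventually_lt_nhds (by linarith [hF1 M]))
    obtain ⟨N', hN'⟩ := eventually_atTop.mp ev6
    refine ⟨max N' N, ?_⟩
    have hbig : N' ≤ N * 2^(max N' N) := by
      calc N' ≤ max N' N := le_max_left _ _
        _ ≤ 2 ^ (max N' N) := (Nat.lt_two_pow_self).le
        _ ≤ N * 2 ^ (max N' N) := Nat.le_mul_of_pos_left _ (by
            have : (1:ℕ) ≤ N := (hN N le_rfl).2; omega)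
    have hbig2 : N ≤ N * 2^(max N' N) := hmN _
    have h1 := HD4 _ hbig2
    have h2 := hN' _ hbig
    have : F M < F (c (max N' N)) := by
      simp only [hc]
      linarith
    exact hFm.reflect_lt this
  -- the covering of [0, ∞)
  have hsub : Set.Ici (0:ℝ) ⊆ Set.Ico 0 (c 0) ∪ ⋃ k, Set.Ico (c k) (c (k+1)) := by
    intro z hz
    have hex : ∃ k, z < c k := hcov z
    rcases Nat.eq_zero_or_pos (Nat.find hex) with h0 | hpos
    · left
      refine ⟨hz, ?_⟩
      have hfs := Nat.find_spec hex
      rw [h0] at hfs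
      exact hfs
    · right
      have hlt := Nat.find_min hex (Nat.sub_lt hpos one_pos)
      push_neg at hlt
      refine Set.mem_iUnion.mpr ⟨Nat.find hex - 1, hlt, ?_⟩
      have heq : Nat.find hex - 1 + 1 = Nat.find hex := by omega
      rw [heq]
      exact Nat.find_spec hex
  -- assemble the integral bound
  set f : ℝ → ENNReal := fun z => ENNReal.ofReal (1 - F z) with hf
  have hbound0 : ∫⁻ z in Set.Ico 0 (c 0), f z ≤ ENNReal.ofReal (c 0) := by
    calc ∫⁻ z in Set.Ico 0 (c 0), f z ≤ ∫⁻ _ in Set.Ico 0 (c 0), 1 :=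
          setLIntegral_mono measurable_const (fun z _ => by
            simp only [hf]
            exact ENNReal.ofReal_le_one.mpr (by linarith [hF0 z]))
      _ = 1 * volume (Set.Ico 0 (c 0)) := setLIntegral_const _ _
      _ = ENNReal.ofReal (c 0 - 0) := by rw [one_mul, Real.volume_Ico]
      _ = ENNReal.ofReal (c 0) := by norm_num
  have hpiece : ∀ k : ℕ, ∫⁻ z in Set.Ico (c k) (c (k+1)), f z ≤
      ENNReal.ofReal (6 * a N) * ENNReal.ofReal (11/20) ^ k := by
    intro k
    have hconst : ∫⁻ z in Set.Ico (c k) (c (k+1)), f z ≤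
        ENNReal.ofReal (2 / 2^k) * volume (Set.Ico (c k) (c (k+1))) := by
      calc ∫⁻ z in Set.Ico (c k) (c (k+1)), f z
          ≤ ∫⁻ _ in Set.Ico (c k) (c (k+1)), ENNReal.ofReal (2 / 2^k) :=
            setLIntegral_mono measurable_const (fun z hzk => by
              simp only [hf]
              apply ENNReal.ofReal_le_ofReal
              have h1 : F (c k) ≤ F z := hFm hzk.1
              have h2 := htail k
              linarith)
        _ = ENNReal.ofReal (2 / 2^k) * volume (Set.Ico (c k) (c (k+1))) :=
            setLIntegral_const _ _
    have hvol : volume (Set.Ico (c k) (c (k+1))) ≤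
        ENNReal.ofReal (3 * ((11/10:ℝ)^k * a N)) := by
      rw [Real.volume_Ico]
      apply ENNReal.ofReal_le_ofReal
      have h1 := hgap k
      have h2 := habound k
      linarith
    calc ∫⁻ z in Set.Ico (c k) (c (k+1)), f z
        ≤ ENNReal.ofReal (2 / 2^k) * volume (Set.Ico (c k) (c (k+1))) := hconst
      _ ≤ ENNReal.ofReal (2 / 2^k) * ENNReal.ofReal (3 * ((11/10:ℝ)^k * a N)) :=
          mul_le_mul_right hvol _
      _ = ENNReal.ofReal (2 / 2^k * (3 * ((11/10:ℝ)^k * a N))) := by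
          rw [← ENNReal.ofReal_mul (by positivity)]
      _ = ENNReal.ofReal (6 * a N * (11/20:ℝ)^k) := by
          congr 1
          have hd : ((11/20:ℝ))^k = (11/10:ℝ)^k / 2^k := by
            rw [show (11/20:ℝ) = (11/10)/2 by norm_num]
            exact div_pow _ _ _
          rw [hd]
          have h2k : (2:ℝ)^k ≠ 0 := by positivity
          field_simp
          ring_nf
      _ = ENNReal.ofReal (6 * a N) * ENNReal.ofReal (11/20) ^ k := by
          rw [ENNReal.ofReal_mul (by linarith [ha N]), ENNReal.ofReal_pow (by norm_num)]
  have hsum : ∑' k : ℕ, ∫⁻ z in Set.Ico (c k) (c (k+1)), f z ≤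
      ENNReal.ofReal (6 * a N) * (1 - ENNReal.ofReal (11/20))⁻¹ := by
    calc ∑' k : ℕ, ∫⁻ z in Set.Ico (c k) (c (k+1)), f z
        ≤ ∑' k : ℕ, ENNReal.ofReal (6 * a N) * ENNReal.ofReal (11/20) ^ k :=
          ENNReal.tsum_le_tsum hpiece
      _ = ENNReal.ofReal (6 * a N) * ∑' k : ℕ, ENNReal.ofReal (11/20) ^ k :=
          ENNReal.tsum_mul_left
      _ = ENNReal.ofReal (6 * a N) * (1 - ENNReal.ofReal (11/20))⁻¹ := by
          rw [ENNReal.tsum_geometric]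
  have hfin2 : (1 - ENNReal.ofReal (11/20 : ℝ))⁻¹ < ⊤ := by
    rw [ENNReal.inv_lt_top]
    rw [tsub_pos_iff_lt]
    exact ENNReal.ofReal_lt_one.mpr (by norm_num)
  calc ∫⁻ z in Set.Ici (0:ℝ), f z
      ≤ ∫⁻ z in (Set.Ico 0 (c 0) ∪ ⋃ k, Set.Ico (c k) (c (k+1))), f z :=
        lintegral_mono_set hsub
    _ ≤ (∫⁻ z in Set.Ico 0 (c 0), f z) + ∫⁻ z in ⋃ k, Set.Ico (c k) (c (k+1)), f z :=
        lintegral_union_le _ _ _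
    _ ≤ ENNReal.ofReal (c 0) + ∑' k : ℕ, ∫⁻ z in Set.Ico (c k) (c (k+1)), f z :=
        add_le_add hbound0 (lintegral_iUnion_le _ _)
    _ ≤ ENNReal.ofReal (c 0) + ENNReal.ofReal (6 * a N) * (1 - ENNReal.ofReal (11/20))⁻¹ :=
        add_le_add_right hsum _
    _ < ⊤ := ENNReal.add_lt_top.mpr
        ⟨ENNReal.ofReal_lt_top, ENNReal.mul_lt_top ENNReal.ofReal_lt_top hfin2⟩
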